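/- Assume: Ψ(r,R) = ψ₃₀r³ + ψ₂₁r²R + ψ₁₂rR² + ψ₀₃R³ + o((|r|+|R|)³) and ∂Ψ/∂r(r,R) = 3ψ₃₀r² + 2ψ₂₁rR + ψ₁₂R² + o((|r|+|R|)²) as (r,R)→(0,0), with ψ₃₀ > 0; Y(r,R) = 1 + y₂₀r² + y₁₁rR + y₀₂R² + o((|r|+|R|)²); Q(r) = q₀r³ + o(r³) and Q'(r) = 3q₀r² + o(r²) as r→0⁺, with q₀ ≠ 0. Define Ψ₁ := Ψ − Q²/(2R), Y₁ := (1 − QQ'/(R·∂Ψ/∂r))·Y, and u₁² := 2Ψ₁/R − 1 + Y₁². Then for every k > 0, lim_{r→0⁺} (kr²)·u₁²(r,kr²)/r³ = 2(ψ₃₀² − q₀²)/ψ₃₀. -/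

import Mathlib

open Filter Topology Asymptotics

/-- The charged velocity function
`u₁²(r,R) = 2Ψ₁/R − 1 + Y₁²`, with `Ψ₁ = Ψ − Q²/(2R)` and
`Y₁ = (1 − QQ'/(R·∂Ψ/∂r))·Y`. -/
noncomputable def u1sq (Ψ Ψr Y : ℝ → ℝ → ℝ) (Q Q' : ℝ → ℝ) (r R : ℝ) : ℝ :=
  2 * (Ψ r R - Q r ^ 2 / (2 * R)) / R - 1
    + ((1 - Q r * Q' r / (R * Ψr r R)) * Y r R) ^ 2

lemma curve_o_tendsto {g : ℝ × ℝ → ℝ} {n : ℕ} (k : ℝ)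
    (h : g =o[nhds ((0:ℝ),(0:ℝ))] fun q : ℝ × ℝ => (|q.1| + |q.2|)^n) :
    Tendsto (fun r : ℝ => g (r, k*r^2) / r^n) (𝓝[>] (0:ℝ)) (𝓝 0) := by
  have hcurve : Tendsto (fun r : ℝ => ((r, k*r^2) : ℝ × ℝ)) (𝓝[>] (0:ℝ)) (𝓝 ((0:ℝ),(0:ℝ))) := by
    have h0 : Tendsto (fun r : ℝ => ((r, k*r^2) : ℝ × ℝ)) (𝓝 0) (𝓝 ((0:ℝ), k*0^2)) := by
      exact (Continuous.tendsto (by continuity) 0)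
    simpa using h0.mono_left nhdsWithin_le_nhds
  have h1 := h.comp_tendsto hcurve
  have h2 : (fun r : ℝ => (|r| + |k*r^2|)^n) =O[𝓝[>] (0:ℝ)] fun r : ℝ => r^n := by
    rw [isBigO_iff]
    refine ⟨(1+|k|)^n, ?_⟩
    filter_upwards [Ioo_mem_nhdsGT_of_mem (by norm_num : (0:ℝ) ∈ Set.Ico (0:ℝ) 1)] with r hr
    obtain ⟨hr0, hr1⟩ := hr
    have hle : |r| + |k*r^2| ≤ (1+|k|)*|r| := by
      rw [abs_of_pos hr0, abs_mul, abs_of_pos (by positivity : (0:ℝ) < r^2)]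
      have h2 : r^2 ≤ r := by nlinarith
      nlinarith [mul_le_mul_of_nonneg_left h2 (abs_nonneg k)]
    calc ‖(|r|+|k*r^2|)^n‖ = (|r|+|k*r^2|)^n := by
          rw [Real.norm_eq_abs, abs_of_nonneg (by positivity)]
      _ ≤ ((1+|k|)*|r|)^n := pow_le_pow_left₀ (by positivity) hle n
      _ = (1+|k|)^n * ‖r^n‖ := by rw [mul_pow, Real.norm_eq_abs, abs_pow]
  exact (h1.trans_isBigO h2).tendsto_div_nhds_zero

set_option maxHeartbeats 2000000 in
/-- Behavior of `R·u₁²` along the curves `R = k r²` (case `p = 1`):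
`(kr²)·u₁²(r,kr²) = (2(ψ₃₀² − q₀²)/ψ₃₀)·r³ + o(r³)`. -/
theorem curve_kr2_limit_u1sq
    (Ψ Ψr Y : ℝ → ℝ → ℝ) (Q Q' : ℝ → ℝ)
    (ψ30 ψ21 ψ12 ψ03 y20 y11 y02 q0 : ℝ)
    (hψ30 : 0 < ψ30) (hq0 : q0 ≠ 0)
    (hlink : ∀ r R, HasDerivAt (fun s => Ψ s R) (Ψr r R) r)
    (hQd : ∀ r, HasDerivAt Q (Q' r) r)
    (hΨ : (fun q : ℝ × ℝ =>
        Ψ q.1 q.2 - (ψ30*q.1^3 + ψ21*q.1^2*q.2 + ψ12*q.1*q.2^2 + ψ03*q.2^3))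
      =o[nhds ((0:ℝ), (0:ℝ))] fun q : ℝ × ℝ => (|q.1| + |q.2|)^3)
    (hΨr : (fun q : ℝ × ℝ =>
        Ψr q.1 q.2 - (3*ψ30*q.1^2 + 2*ψ21*q.1*q.2 + ψ12*q.2^2))
      =o[nhds ((0:ℝ), (0:ℝ))] fun q : ℝ × ℝ => (|q.1| + |q.2|)^2)
    (hY : (fun q : ℝ × ℝ =>
        Y q.1 q.2 - (1 + y20*q.1^2 + y11*q.1*q.2 + y02*q.2^2))
      =o[nhds ((0:ℝ), (0:ℝ))] fun q : ℝ × ℝ => (|q.1| + |q.2|)^2)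
    (hQ : (fun r : ℝ => Q r - q0 * r^3) =o[𝓝[>] (0:ℝ)] fun r : ℝ => r^3)
    (hQ' : (fun r : ℝ => Q' r - 3 * q0 * r^2) =o[𝓝[>] (0:ℝ)] fun r : ℝ => r^2) :
    ∀ k : ℝ, 0 < k →
      Tendsto (fun r : ℝ => (k*r^2) * u1sq Ψ Ψr Y Q Q' r (k*r^2) / r^3)
        (𝓝[>] (0:ℝ)) (𝓝 (2 * (ψ30^2 - q0^2) / ψ30)) := by
  intro k hk
  have hk' : k ≠ 0 := hk.ne'
  have hψne : ψ30 ≠ 0 := hψ30.ne'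
  have h30 : (0:ℝ) < 3*ψ30 := by linarith
  have hrpos : ∀ᶠ r in 𝓝[>] (0:ℝ), (0:ℝ) < r := eventually_mem_nhdsWithin
  have hrid : Tendsto (fun r : ℝ => r) (𝓝[>] (0:ℝ)) (𝓝 0) :=
    tendsto_id.mono_right nhdsWithin_le_nhds
  -- A : Ψ along the curve
  have hA : Tendsto (fun r : ℝ => Ψ r (k*r^2) / r^3) (𝓝[>] (0:ℝ)) (𝓝 ψ30) := by
    have tP : Tendsto (fun r : ℝ => ψ30 + ψ21*k*r + ψ12*k^2*r^2 + ψ03*k^3*r^3)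
        (𝓝[>] (0:ℝ)) (𝓝 ψ30) := by
      have := (Continuous.tendsto
        (by continuity : Continuous fun r : ℝ => ψ30 + ψ21*k*r + ψ12*k^2*r^2 + ψ03*k^3*r^3)
        0).mono_left (nhdsWithin_le_nhds (s := Set.Ioi (0:ℝ)))
      simpa using this
    have h' := (curve_o_tendsto k hΨ).add tP
    rw [zero_add] at h'
    apply h'.congr'
    filter_upwards [hrpos] with r hr
    have hrne : r ≠ 0 := hr.ne'
    field_simp
    ring
  -- B : Ψr along the curve
  have hB : Tendsto (fun r : ℝ => Ψr r (k*r^2) / r^2) (𝓝[>] (0:ℝ)) (𝓝 (3*ψ30)) := by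
    have tP : Tendsto (fun r : ℝ => 3*ψ30 + 2*ψ21*k*r + ψ12*k^2*r^2)
        (𝓝[>] (0:ℝ)) (𝓝 (3*ψ30)) := by
      have := (Continuous.tendsto
        (by continuity : Continuous fun r : ℝ => 3*ψ30 + 2*ψ21*k*r + ψ12*k^2*r^2)
        0).mono_left (nhdsWithin_le_nhds (s := Set.Ioi (0:ℝ)))
      simpa using this
    have h' := (curve_o_tendsto k hΨr).add tP
    rw [zero_add] at h'
    apply h'.congr'
    filter_upwards [hrpos] with r hr
    have hrne : r ≠ 0 := hr.ne'
    field_simp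
    ring
  -- C2 : (Y-1)/r → 0 along the curve
  have hC2 : Tendsto (fun r : ℝ => (Y r (k*r^2) - 1) / r) (𝓝[>] (0:ℝ)) (𝓝 0) := by
    have tP : Tendsto (fun r : ℝ => y20*r + y11*k*r^2 + y02*k^2*r^3)
        (𝓝[>] (0:ℝ)) (𝓝 0) := by
      have := (Continuous.tendsto
        (by continuity : Continuous fun r : ℝ => y20*r + y11*k*r^2 + y02*k^2*r^3)
        0).mono_left (nhdsWithin_le_nhds (s := Set.Ioi (0:ℝ)))
      simpa using this
    have h' := (((curve_o_tendsto k hY).mul hrid).add tP)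
    rw [zero_mul, zero_add] at h'
    apply h'.congr'
    filter_upwards [hrpos] with r hr
    have hrne : r ≠ 0 := hr.ne'
    field_simp
    ring
  -- C1 : Y → 1 along the curve
  have hC1 : Tendsto (fun r : ℝ => Y r (k*r^2)) (𝓝[>] (0:ℝ)) (𝓝 1) := by
    have h' := (hC2.mul hrid).add (tendsto_const_nhds (x := (1:ℝ)))
    rw [zero_mul, zero_add] at h'
    apply h'.congr'
    filter_upwards [hrpos] with r hr
    have hrne : r ≠ 0 := hr.ne'
    field_simp
    ring
  -- D : Q/r³ → q₀
  have hD : Tendsto (fun r : ℝ => Q r / r^3) (𝓝[>] (0:ℝ)) (𝓝 q0) := by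
    have h' := hQ.tendsto_div_nhds_zero.add (tendsto_const_nhds (x := q0))
    rw [zero_add] at h'
    apply h'.congr'
    filter_upwards [hrpos] with r hr
    have hrne : r ≠ 0 := hr.ne'
    field_simp
    ring
  -- E : Q'/r² → 3q₀
  have hE : Tendsto (fun r : ℝ => Q' r / r^2) (𝓝[>] (0:ℝ)) (𝓝 (3*q0)) := by
    have h' := hQ'.tendsto_div_nhds_zero.add (tendsto_const_nhds (x := 3*q0))
    rw [zero_add] at h'
    apply h'.congr'
    filter_upwards [hrpos] with r hr
    have hrne : r ≠ 0 := hr.ne'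
    field_simp
    ring
  -- Ψr nonvanishing along the curve
  have hbne : ∀ᶠ r in 𝓝[>] (0:ℝ), Ψr r (k*r^2) ≠ 0 := by
    have h1 : ∀ᶠ r in 𝓝[>] (0:ℝ), 0 < Ψr r (k*r^2)/r^2 :=
      hB.eventually (eventually_gt_nhds h30)
    filter_upwards [h1] with r h1
    intro h
    rw [h] at h1
    simp at h1
  -- the reorganized expression and its limit
  have hF : Tendsto (fun r : ℝ =>
      2*(Ψ r (k*r^2)/r^3) - (Q r/r^3)^2*r/k
        + k*((Y r (k*r^2) - 1)/r)*(Y r (k*r^2) + 1)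
        + (Y r (k*r^2))^2 *
          ((Q r/r^3)^2*(Q' r/r^2)^2*r/(k*(Ψr r (k*r^2)/r^2)^2)
            - 2*(Q r/r^3)*(Q' r/r^2)/(Ψr r (k*r^2)/r^2)))
      (𝓝[>] (0:ℝ))
      (𝓝 (2*ψ30 - q0^2*0/k + k*0*(1+1)
        + 1^2*(q0^2*(3*q0)^2*0/(k*(3*ψ30)^2) - 2*q0*(3*q0)/(3*ψ30)))) := by
    refine Tendsto.add (Tendsto.add (Tendsto.sub ?_ ?_) ?_) ?_
    · exact hA.const_mul 2
    · exact ((hD.pow 2).mul hrid).div_const k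
    · exact (tendsto_const_nhds.mul hC2).mul (hC1.add tendsto_const_nhds)
    · refine Tendsto.mul (hC1.pow 2) (Tendsto.sub ?_ ?_)
      · exact Tendsto.div (((hD.pow 2).mul (hE.pow 2)).mul hrid)
          (tendsto_const_nhds.mul (hB.pow 2))
          (ne_of_gt (mul_pos hk (pow_pos h30 2)))
      · exact Tendsto.div ((tendsto_const_nhds.mul hD).mul hE) hB (ne_of_gt h30)
  have hval : (2*ψ30 - q0^2*0/k + k*0*(1+1)
      + 1^2*(q0^2*(3*q0)^2*0/(k*(3*ψ30)^2) - 2*q0*(3*q0)/(3*ψ30)))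
      = 2 * (ψ30^2 - q0^2) / ψ30 := by
    field_simp
    ring
  rw [hval] at hF
  apply hF.congr'
  filter_upwards [hrpos, hbne] with r hr hb
  have hrne : r ≠ 0 := hr.ne'
  unfold u1sq
  field_simp
  ring
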